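/- One has ⋂_{Λ>0} H_Λ = {0}, and the union ⋃_{Λ>0} H_Λ is dense in K. -/

import Mathlib

open MeasureTheory Complex Set Real

noncomputable section

/-- The measure `dt` on `(0,∞)`. -/
def mu : Measure ℝ := volume.restrict (Ioi 0)

/-- `K = L²((0,∞), dt)`. -/
abbrev Kspace := Lp ℂ 2 mu

/-- `Fp` is the Fourier cosine transform `F₊`: a unitary involution of `K` given, in the
`L²` sense, by `F₊(f)(t) = 2∫₀^∞ cos(2πtu) f(u) du`. -/
def IsCosineTransform (Fp : Kspace ≃ₗᵢ[ℂ] Kspace) : Prop :=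
  (∀ f : Kspace, Fp (Fp f) = f) ∧
  ∀ f : Kspace, Integrable (⇑f) mu →
    ∀ᵐ t ∂mu, (Fp f : ℝ → ℂ) t = 2 * ∫ u, (Real.cos (2 * π * t * u) : ℂ) * f u ∂mu

/-- `f ∈ K_{a,b}`: `f` vanishes a.e. on `(0,a)` and `F₊(f)` vanishes a.e. on `(0,b)`. -/
def MemKab (Fp : Kspace ≃ₗᵢ[ℂ] Kspace) (a b : ℝ) (f : Kspace) : Prop :=
  (∀ᵐ t ∂mu, t < a → (f : ℝ → ℂ) t = 0) ∧
  (∀ᵐ t ∂mu, t < b → (Fp f : ℝ → ℂ) t = 0)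

/-- `Iop` is the unitary involution `I(f)(t) = (1/t) f(1/t)` of `K`. -/
def IsIOperator (Iop : Kspace ≃ₗᵢ[ℂ] Kspace) : Prop :=
  (∀ f : Kspace, Iop (Iop f) = f) ∧
  ∀ f : Kspace, ∀ᵐ t ∂mu, (Iop f : ℝ → ℂ) t = (t : ℂ)⁻¹ * (f : ℝ → ℂ) t⁻¹

/-- `f ∈ H_Λ`: `f` vanishes a.e. on `(Λ,∞)` and `G(f) = I(F₊(I(f)))` vanishes a.e. on
`(Λ,∞)`. -/
def MemH (Fp Iop : Kspace ≃ₗᵢ[ℂ] Kspace) (Λ : ℝ) (f : Kspace) : Prop :=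
  (∀ᵐ t ∂mu, Λ < t → (f : ℝ → ℂ) t = 0) ∧
  (∀ᵐ t ∂mu, Λ < t → (Iop (Fp (Iop f)) : ℝ → ℂ) t = 0)

/-! ### Auxiliary material -/

open Filter Topology
open scoped ENNReal NNReal

local notation "⟪" x ", " y "⟫" => @inner ℂ _ _ x y

namespace Statement14Aux

lemma mu_apply' (s : Set ℝ) : mu s = volume (s ∩ Ioi 0) :=
  Measure.restrict_apply' measurableSet_Ioi

lemma mu_Iic {b : ℝ} (hb : 0 ≤ b) : mu (Iic b) = ENNReal.ofReal b := by
  rw [mu_apply']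
  have h : Iic b ∩ Ioi 0 = Ioc 0 b := by
    ext x; simp only [mem_inter_iff, mem_Iic, mem_Ioi, mem_Ioc]; tauto
  rw [h, Real.volume_Ioc, sub_zero]

lemma mu_ae_pos : ∀ᵐ t ∂mu, 0 < t :=
  ae_restrict_mem measurableSet_Ioi

lemma mu_ae_ne (c : ℝ) : ∀ᵐ t ∂mu, t ≠ c := by
  rw [ae_iff]
  have h : {t : ℝ | ¬ t ≠ c} = {c} := by ext x; simp
  rw [h, mu_apply']
  exact measure_mono_null inter_subset_left (Real.volume_singleton)

/-- Null sets of `mu` are preserved by inversion. -/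
lemma mu_ae_inv {P : ℝ → Prop} (h : ∀ᵐ t ∂mu, P t) : ∀ᵐ t ∂mu, P t⁻¹ := by
  rw [ae_iff] at h ⊢
  set S := {a : ℝ | ¬ P a} with hS
  have hN : mu (toMeasurable mu S) = 0 := by rwa [measure_toMeasurable]
  set N' : Set ℝ := toMeasurable mu S ∩ Ioi 0 with hN'
  have hN'm : MeasurableSet N' := (measurableSet_toMeasurable mu S).inter measurableSet_Ioi
  have hN'0 : volume N' = 0 := by rw [← mu_apply'] at *; exact hN
  have himg : volume ((fun x : ℝ => x⁻¹) '' N') = 0 := by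
    have hderiv : ∀ x ∈ N', HasFDerivWithinAt (fun y : ℝ => y⁻¹)
        ((1 : ℝ →L[ℝ] ℝ).smulRight (-(x ^ 2)⁻¹)) N' x := fun x hx =>
      ((hasDerivAt_inv (ne_of_gt hx.2)).hasDerivWithinAt).hasFDerivWithinAt
    have hinj : InjOn (fun y : ℝ => y⁻¹) N' := fun a _ b _ hab => inv_injective hab
    have := lintegral_image_eq_lintegral_abs_det_fderiv_mul volume hN'm hderiv hinj
      (fun _ => (1 : ENNReal))
    rw [setLIntegral_one, setLIntegral_measure_zero _ _ hN'0] at this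
    exact this
  rw [mu_apply']
  refine measure_mono_null ?_ himg
  rintro a ⟨ha, ha0⟩
  refine ⟨a⁻¹, ⟨subset_toMeasurable mu S ha, mem_Ioi.2 (inv_pos.2 ha0)⟩, inv_inv a⟩

/-- The truncation of an `L²` function to a measurable set, as an element of `K`. -/
def cutLp (s : Set ℝ) (hs : MeasurableSet s) (f : Kspace) : Kspace :=
  MemLp.toLp (s.indicator ⇑f) ((Lp.memLp f).indicator hs)

lemma cutLp_coe (s : Set ℝ) (hs : MeasurableSet s) (f : Kspace) :
    ⇑(cutLp s hs f) =ᵐ[mu] s.indicator ⇑f :=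
  MemLp.coeFn_toLp _

lemma inner_cutLp_left (s : Set ℝ) (hs : MeasurableSet s) (f u : Kspace)
    (hu : ∀ᵐ t ∂mu, t ∉ s → (u : ℝ → ℂ) t = 0) :
    ⟪f, u⟫ = ⟪cutLp s hs f, u⟫ := by
  rw [L2.inner_def, L2.inner_def]
  apply integral_congr_ae
  filter_upwards [hu, cutLp_coe s hs f] with t hta htc
  by_cases hts : t ∈ s
  · rw [htc, indicator_of_mem hts]
  · rw [hta hts, htc, indicator_of_notMem hts]
    simp

lemma inner_cutLp_right (s : Set ℝ) (hs : MeasurableSet s) (a f : Kspace)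
    (ha : ∀ᵐ t ∂mu, t ∉ s → (a : ℝ → ℂ) t = 0) :
    ⟪a, f⟫ = ⟪a, cutLp s hs f⟫ := by
  rw [L2.inner_def, L2.inner_def]
  apply integral_congr_ae
  filter_upwards [ha, cutLp_coe s hs f] with t hta htc
  by_cases hts : t ∈ s
  · rw [htc, indicator_of_mem hts]
  · rw [hta hts, htc, indicator_of_notMem hts]
    simp

lemma norm_cutLp_le (s : Set ℝ) (hs : MeasurableSet s) (hfin : mu s ≠ ⊤) (f : Kspace) {C : ℝ}
    (hC : 0 ≤ C) (hb : ∀ᵐ t ∂mu, t ∈ s → ‖(f : ℝ → ℂ) t‖ ≤ C) :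
    ‖cutLp s hs f‖ ≤ Real.sqrt (mu s).toReal * C := by
  rw [cutLp, Lp.norm_toLp, eLpNorm_indicator_eq_eLpNorm_restrict hs]
  have h1 : eLpNorm (⇑f) 2 (mu.restrict s) ≤
      (mu.restrict s) univ ^ (2 : ℝ≥0∞).toReal⁻¹ * ENNReal.ofReal C :=
    eLpNorm_le_of_ae_bound ((ae_restrict_iff' hs).2 hb)
  have hne : (mu.restrict s) univ ^ (2 : ℝ≥0∞).toReal⁻¹ * ENNReal.ofReal C ≠ ⊤ := by
    refine ENNReal.mul_ne_top ?_ ENNReal.ofReal_ne_top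
    refine ENNReal.rpow_ne_top_of_nonneg (by positivity) ?_
    rwa [Measure.restrict_apply_univ]
  refine le_trans (ENNReal.toReal_mono hne h1) (le_of_eq ?_)
  rw [Measure.restrict_apply_univ, ENNReal.toReal_mul, ENNReal.toReal_ofReal hC,
    ← ENNReal.toReal_rpow, Real.sqrt_eq_rpow]
  norm_num

lemma norm_cutLp_mono (s s' : Set ℝ) (hs : MeasurableSet s) (hs' : MeasurableSet s')
    (f : Kspace) (hss : s ⊆ s') :
    ‖cutLp s hs f‖ ≤ ‖cutLp s' hs' f‖ := by
  rw [cutLp, cutLp, Lp.norm_toLp, Lp.norm_toLp]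
  refine ENNReal.toReal_mono ?_ (eLpNorm_mono_ae (Eventually.of_forall fun t => ?_))
  · exact ((eLpNorm_indicator_le _).trans_lt (Lp.eLpNorm_lt_top f)).ne
  · by_cases h : t ∈ s
    · rw [indicator_of_mem h, indicator_of_mem (hss h)]
    · rw [indicator_of_notMem h]; simp

lemma tendsto_norm_cutLp (f : Kspace) (s : ℕ → Set ℝ) (hs : ∀ n, MeasurableSet (s n))
    (hev : ∀ t : ℝ, 0 < t → ∀ᶠ n in atTop, t ∉ s n) :
    Tendsto (fun n => ‖cutLp (s n) (hs n) f‖) atTop (𝓝 0) := by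
  classical
  set φ : ℝ → ENNReal := fun t => (‖(f : ℝ → ℂ) t‖₊ : ENNReal) ^ (2 : ℝ) with hφ
  have hφmeas : AEMeasurable φ mu := ((Lp.aestronglyMeasurable f).enorm).pow_const _
  have hφfin : ∫⁻ t, φ t ∂mu ≠ ⊤ := by
    have h := Lp.eLpNorm_lt_top f
    rw [eLpNorm_eq_eLpNorm' two_ne_zero ENNReal.ofNat_ne_top] at h
    have h2R : (2 : ℝ≥0∞).toReal = (2 : ℝ) := by simp
    have h2 := lintegral_rpow_enorm_lt_top_of_eLpNorm'_lt_top
      (by rw [h2R]; norm_num) h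
    rw [h2R] at h2
    exact h2.ne
  have hL : Tendsto (fun n => ∫⁻ t, (s n).indicator φ t ∂mu) atTop (𝓝 0) := by
    have h0 : (𝓝 (0 : ENNReal)) = 𝓝 (∫⁻ _, (0:ENNReal) ∂mu) := by simp
    rw [h0]
    refine tendsto_lintegral_of_dominated_convergence' φ
      (fun n => hφmeas.indicator (hs n))
      (fun n => Eventually.of_forall fun t => Set.indicator_le_self _ _ t) hφfin ?_
    filter_upwards [mu_ae_pos] with t ht
    have hev' : ∀ᶠ n in atTop, (s n).indicator φ t = 0 :=
      (hev t ht).mono fun n hn => indicator_of_notMem hn _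
    exact Tendsto.congr' (hev'.mono fun n hn => hn.symm) tendsto_const_nhds
  have hnorm : ∀ n, ‖cutLp (s n) (hs n) f‖ =
      Real.sqrt ((∫⁻ t, (s n).indicator φ t ∂mu).toReal) := by
    intro n
    rw [cutLp, Lp.norm_toLp, eLpNorm_eq_lintegral_rpow_enorm_toReal two_ne_zero ENNReal.ofNat_ne_top]
    simp only [enorm_eq_nnnorm]
    have hpt : ∀ t, (‖(s n).indicator (⇑f) t‖₊ : ENNReal) ^ (2 : ℝ≥0∞).toReal
        = (s n).indicator φ t := by
      intro t
      have h2 : (2 : ℝ≥0∞).toReal = (2 : ℝ) := by simp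
      by_cases h : t ∈ s n
      · rw [indicator_of_mem h, indicator_of_mem h, h2]
      · rw [indicator_of_notMem h, indicator_of_notMem h]
        simp only [nnnorm_zero, ENNReal.coe_zero]
        rw [h2, ENNReal.zero_rpow_of_pos (by norm_num)]
    rw [lintegral_congr hpt, ← ENNReal.toReal_rpow, Real.sqrt_eq_rpow]
    norm_num
  have h2 : Tendsto (fun n => (∫⁻ t, (s n).indicator φ t ∂mu).toReal) atTop (𝓝 0) := by
    have := (ENNReal.tendsto_toReal (by simp : (0:ENNReal) ≠ ⊤)).comp hL
    simpa [Function.comp_def] using this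
  have h3 := (Real.continuous_sqrt.tendsto 0).comp h2
  rw [Real.sqrt_zero] at h3
  exact h3.congr fun n => (hnorm n).symm

/-- If `f` is orthogonal to every element vanishing a.e. below `Λ`, then `f` vanishes
a.e. above `Λ`. -/
lemma vanish_of_orth {Λ : ℝ} (f : Kspace)
    (h : ∀ u : Kspace, (∀ᵐ t ∂mu, t < Λ → (u : ℝ → ℂ) t = 0) → ⟪u, f⟫ = 0) :
    ∀ᵐ t ∂mu, Λ < t → (f : ℝ → ℂ) t = 0 := by
  set u := cutLp (Ioi Λ) measurableSet_Ioi f with hu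
  have hu0 : ∀ᵐ t ∂mu, t < Λ → (u : ℝ → ℂ) t = 0 := by
    filter_upwards [cutLp_coe (Ioi Λ) measurableSet_Ioi f] with t ht htΛ
    rw [ht, indicator_of_notMem (by simp only [mem_Ioi, not_lt]; linarith)]
  have h0 := h u hu0
  have hint : Integrable (fun t => ⟪(u : ℝ → ℂ) t, (f : ℝ → ℂ) t⟫) mu :=
    L2.integrable_inner u f
  have heq : (fun t => ⟪(u : ℝ → ℂ) t, (f : ℝ → ℂ) t⟫)
      =ᵐ[mu] (Ioi Λ).indicator (fun t => ((‖(f : ℝ → ℂ) t‖ : ℂ)) ^ 2) := by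
    filter_upwards [cutLp_coe (Ioi Λ) measurableSet_Ioi f] with t ht
    rw [ht]
    by_cases hts : t ∈ Ioi Λ
    · rw [indicator_of_mem hts, indicator_of_mem hts]
      exact inner_self_eq_norm_sq_to_K _
    · rw [indicator_of_notMem hts, indicator_of_notMem hts, inner_zero_left]
  have h1 : ∫ t, (Ioi Λ).indicator (fun t => ‖(f : ℝ → ℂ) t‖ ^ 2) t ∂mu = 0 := by
    have h2 : ∫ t, RCLike.re ((Ioi Λ).indicator (fun t => ((‖(f : ℝ → ℂ) t‖ : ℂ)) ^ 2) t) ∂mu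
        = RCLike.re (0 : ℂ) := by
      rw [integral_re (hint.congr heq), ← integral_congr_ae heq, ← L2.inner_def, h0]
    rw [map_zero] at h2
    rw [← h2]
    apply integral_congr_ae
    filter_upwards with t
    by_cases hts : t ∈ Ioi Λ
    · simp only [indicator_of_mem hts, ← Complex.ofReal_pow, RCLike.re_to_complex,
        Complex.ofReal_re]
    · simp only [indicator_of_notMem hts, map_zero]
  have hintre : Integrable (fun t => (Ioi Λ).indicator (fun t => ‖(f : ℝ → ℂ) t‖ ^ 2) t) mu := by
    have := (hint.congr heq).re
    refine this.congr (Eventually.of_forall fun t => ?_)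
    by_cases hts : t ∈ Ioi Λ
    · simp only [indicator_of_mem hts, ← Complex.ofReal_pow, RCLike.re_to_complex,
        Complex.ofReal_re]
    · simp only [indicator_of_notMem hts, map_zero]
  have hnn : 0 ≤ᵐ[mu] fun t => (Ioi Λ).indicator (fun t => ‖(f : ℝ → ℂ) t‖ ^ 2) t :=
    Eventually.of_forall fun t => indicator_apply_nonneg fun _ => sq_nonneg _
  have h3 := (integral_eq_zero_iff_of_nonneg_ae hnn hintre).1 h1
  filter_upwards [h3] with t ht htΛ
  have : (Ioi Λ).indicator (fun t => ‖(f : ℝ → ℂ) t‖ ^ 2) t = 0 := ht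
  rw [indicator_of_mem (mem_Ioi.2 htΛ)] at this
  have h4 : ‖(f : ℝ → ℂ) t‖ = 0 := by
    have := sq_eq_zero_iff.1 this
    exact this
  exact norm_eq_zero.1 h4

/-- The subspace of functions vanishing a.e. on `(0, Λ)`. -/
def Dsub (Λ : ℝ) : Submodule ℂ Kspace where
  carrier := {u : Kspace | ∀ᵐ t ∂mu, t < Λ → (u : ℝ → ℂ) t = 0}
  zero_mem' := by
    simp only [Set.mem_setOf_eq]
    filter_upwards [Lp.coeFn_zero (E := ℂ) (p := 2) (μ := mu)] with t ht _
    simpa using ht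
  add_mem' := by
    intro a b ha hb
    simp only [Set.mem_setOf_eq] at ha hb ⊢
    filter_upwards [Lp.coeFn_add a b, ha, hb] with t ht hat hbt htΛ
    rw [ht, Pi.add_apply, hat htΛ, hbt htΛ, add_zero]
  smul_mem' := by
    intro c a ha
    simp only [Set.mem_setOf_eq] at ha ⊢
    filter_upwards [Lp.coeFn_smul c a, ha] with t ht hat htΛ
    rw [ht, Pi.smul_apply, hat htΛ, smul_zero]

lemma mem_Dsub {Λ : ℝ} {u : Kspace} :
    u ∈ Dsub Λ ↔ ∀ᵐ t ∂mu, t < Λ → (u : ℝ → ℂ) t = 0 := Iff.rfl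

/-- The operator `G = I ∘ F₊ ∘ I`. -/
def gopE (Fp Iop : Kspace ≃ₗᵢ[ℂ] Kspace) : Kspace ≃ₗᵢ[ℂ] Kspace :=
  (Iop.trans Fp).trans Iop

lemma gopE_apply (Fp Iop : Kspace ≃ₗᵢ[ℂ] Kspace) (f : Kspace) :
    gopE Fp Iop f = Iop (Fp (Iop f)) := rfl

section Ops

variable {Fp Iop : Kspace ≃ₗᵢ[ℂ] Kspace}

lemma gopE_invol (hFp : IsCosineTransform Fp) (hIop : IsIOperator Iop) (f : Kspace) :
    gopE Fp Iop (gopE Fp Iop f) = f := by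
  rw [gopE_apply, gopE_apply, hIop.1 (Fp (Iop f)), hFp.1 (Iop f), hIop.1 f]

lemma gopE_selfadj (hFp : IsCosineTransform Fp) (hIop : IsIOperator Iop) (x y : Kspace) :
    ⟪gopE Fp Iop x, y⟫ = ⟪x, gopE Fp Iop y⟫ := by
  conv_lhs => rw [← gopE_invol hFp hIop y]
  exact (gopE Fp Iop).inner_map_map x (gopE Fp Iop y)

lemma Iop_selfadj (hIop : IsIOperator Iop) (x y : Kspace) :
    ⟪Iop x, y⟫ = ⟪x, Iop y⟫ := by
  conv_lhs => rw [← hIop.1 y]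
  exact Iop.inner_map_map x (Iop y)

/-- `L²`-functions supported in `(0,b]` are integrable, with `L¹` norm at most `√b` times
the `L²` norm. -/
lemma supp_integrable {b : ℝ} (hb : 0 < b) (v : Kspace)
    (hv : ∀ᵐ t ∂mu, b < t → (v : ℝ → ℂ) t = 0) :
    Integrable (⇑v) mu ∧ ∫ t, ‖(v : ℝ → ℂ) t‖ ∂mu ≤ Real.sqrt b * ‖v‖ := by
  have hfin : mu (Iic b) ≠ ⊤ := by rw [mu_Iic hb.le]; exact ENNReal.ofReal_ne_top
  haveI : IsFiniteMeasure (mu.restrict (Iic b)) :=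
    ⟨by rw [Measure.restrict_apply_univ]; exact lt_of_le_of_ne le_top hfin⟩
  have hvI : IntegrableOn (⇑v) (Iic b) mu :=
    MemLp.integrable one_le_two ((Lp.memLp v).restrict _)
  have heq : ⇑v =ᵐ[mu] (Iic b).indicator ⇑v := by
    filter_upwards [hv] with t ht
    by_cases h : t ∈ Iic b
    · rw [indicator_of_mem h]
    · rw [indicator_of_notMem h, ht (by simpa [mem_Iic, not_le] using h)]
  have hint : Integrable (⇑v) mu :=
    ((integrable_indicator_iff measurableSet_Iic).2 hvI).congr heq.symm
  refine ⟨hint, ?_⟩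
  have h1 : ∫ t, ‖(v : ℝ → ℂ) t‖ ∂mu = ∫ t in Iic b, ‖(v : ℝ → ℂ) t‖ ∂mu := by
    rw [← integral_indicator measurableSet_Iic]
    apply integral_congr_ae
    filter_upwards [heq] with t ht
    rw [← norm_indicator_eq_indicator_norm, ← ht]
  have h2 : ∫ t in Iic b, ‖(v : ℝ → ℂ) t‖ ∂mu
      = (eLpNorm (⇑v) 1 (mu.restrict (Iic b))).toReal := by
    rw [integral_norm_eq_lintegral_enorm ((Lp.aestronglyMeasurable v).restrict),
      eLpNorm_one_eq_lintegral_enorm]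
  have h3 : eLpNorm (⇑v) 1 (mu.restrict (Iic b)) ≤
      eLpNorm (⇑v) 2 (mu.restrict (Iic b)) *
        (mu.restrict (Iic b)) univ ^ (1 / (1 : ℝ≥0∞).toReal - 1 / (2 : ℝ≥0∞).toReal) :=
    eLpNorm_le_eLpNorm_mul_rpow_measure_univ one_le_two ((Lp.aestronglyMeasurable v).restrict)
  have h4 : eLpNorm (⇑v) 2 (mu.restrict (Iic b)) *
        (mu.restrict (Iic b)) univ ^ (1 / (1 : ℝ≥0∞).toReal - 1 / (2 : ℝ≥0∞).toReal)
      ≤ eLpNorm (⇑v) 2 mu *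
        (ENNReal.ofReal b) ^ (1 / (1 : ℝ≥0∞).toReal - 1 / (2 : ℝ≥0∞).toReal) := by
    refine mul_le_mul' (eLpNorm_mono_measure _ Measure.restrict_le_self) (le_of_eq ?_)
    rw [Measure.restrict_apply_univ, mu_Iic hb.le]
  have hne : eLpNorm (⇑v) 2 mu *
      (ENNReal.ofReal b) ^ (1 / (1 : ℝ≥0∞).toReal - 1 / (2 : ℝ≥0∞).toReal) ≠ ⊤ := by
    refine ENNReal.mul_ne_top (Lp.eLpNorm_ne_top v) ?_
    refine ENNReal.rpow_ne_top_of_nonneg (by norm_num) ENNReal.ofReal_ne_top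
  have h5 : (eLpNorm (⇑v) 2 mu *
      (ENNReal.ofReal b) ^ (1 / (1 : ℝ≥0∞).toReal - 1 / (2 : ℝ≥0∞).toReal)).toReal
      = Real.sqrt b * ‖v‖ := by
    rw [ENNReal.toReal_mul, ← ENNReal.toReal_rpow, ENNReal.toReal_ofReal hb.le,
      Lp.norm_def, Real.sqrt_eq_rpow, mul_comm]
    norm_num
  calc ∫ t, ‖(v : ℝ → ℂ) t‖ ∂mu
      = (eLpNorm (⇑v) 1 (mu.restrict (Iic b))).toReal := by rw [h1, h2]
    _ ≤ (eLpNorm (⇑v) 2 mu *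
        (ENNReal.ofReal b) ^ (1 / (1 : ℝ≥0∞).toReal - 1 / (2 : ℝ≥0∞).toReal)).toReal :=
        ENNReal.toReal_mono hne (h3.trans h4)
    _ = Real.sqrt b * ‖v‖ := h5

/-- The transform of an `L²` function supported in `(0,b]` is a.e. bounded by `2√b` times
its norm. -/
lemma Fp_pointwise_bound (hFp : IsCosineTransform Fp) {b : ℝ} (hb : 0 < b) (v : Kspace)
    (hv : ∀ᵐ t ∂mu, b < t → (v : ℝ → ℂ) t = 0) :
    ∀ᵐ t ∂mu, ‖(Fp v : ℝ → ℂ) t‖ ≤ 2 * (Real.sqrt b * ‖v‖) := by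
  obtain ⟨hint, hL1⟩ := supp_integrable hb v hv
  filter_upwards [hFp.2 v hint] with t ht
  rw [ht]
  have hcosm : AEStronglyMeasurable (fun u : ℝ => ((Real.cos (2 * π * t * u) : ℝ) : ℂ)) mu :=
    (Complex.continuous_ofReal.comp
      (Real.continuous_cos.comp (continuous_const.mul continuous_id))).aestronglyMeasurable
  have hcos : Integrable (fun u => ((Real.cos (2 * π * t * u) : ℝ) : ℂ) * (v : ℝ → ℂ) u) mu :=
    Integrable.bdd_mul (c := 1) hint hcosm (Eventually.of_forall fun u => by
      rw [Complex.norm_real]; exact abs_cos_le_one _)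
  have hle : ‖∫ u, ((Real.cos (2 * π * t * u) : ℝ) : ℂ) * (v : ℝ → ℂ) u ∂mu‖
      ≤ Real.sqrt b * ‖v‖ := by
    refine le_trans (norm_integral_le_integral_norm _) (le_trans ?_ hL1)
    refine integral_mono hcos.norm hint.norm fun u => ?_
    rw [norm_mul, Complex.norm_real]
    calc |Real.cos (2 * π * t * u)| * ‖(v : ℝ → ℂ) u‖
        ≤ 1 * ‖(v : ℝ → ℂ) u‖ := by
          exact mul_le_mul_of_nonneg_right (abs_cos_le_one _) (norm_nonneg _)
      _ = ‖(v : ℝ → ℂ) u‖ := one_mul _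
  calc ‖(2 : ℂ) * ∫ u, ((Real.cos (2 * π * t * u) : ℝ) : ℂ) * (v : ℝ → ℂ) u ∂mu‖
      = 2 * ‖∫ u, ((Real.cos (2 * π * t * u) : ℝ) : ℂ) * (v : ℝ → ℂ) u ∂mu‖ := by
        rw [norm_mul]; norm_num
    _ ≤ 2 * (Real.sqrt b * ‖v‖) := by
        exact mul_le_mul_of_nonneg_left hle (by norm_num)

/-- The key angle estimate: for `u, w` vanishing a.e. below `Λ`,
`|⟪u, G w⟫| ≤ 2 Λ⁻¹ ‖u‖ ‖w‖`. -/
lemma inner_angle (hFp : IsCosineTransform Fp) (hIop : IsIOperator Iop) {Λ : ℝ} (hΛ : 0 < Λ)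
    (u w : Kspace)
    (hu : ∀ᵐ t ∂mu, t < Λ → (u : ℝ → ℂ) t = 0)
    (hw : ∀ᵐ t ∂mu, t < Λ → (w : ℝ → ℂ) t = 0) :
    ‖⟪u, gopE Fp Iop w⟫‖ ≤ 2 * Λ⁻¹ * ‖u‖ * ‖w‖ := by
  set b := Λ⁻¹ with hbdef
  have hb : 0 < b := inv_pos.2 hΛ
  have htrans : ∀ z : Kspace, (∀ᵐ t ∂mu, t < Λ → (z : ℝ → ℂ) t = 0) →
      ∀ᵐ t ∂mu, b < t → (Iop z : ℝ → ℂ) t = 0 := by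
    intro z hz
    filter_upwards [hIop.2 z, mu_ae_inv hz, mu_ae_pos] with t h1 h2 h3 hbt
    have hinv : t⁻¹ < Λ := by
      rw [← inv_inv Λ]
      exact inv_strictAnti₀ hb hbt
    rw [h1, h2 hinv, mul_zero]
  have hu' := htrans u hu
  have hw' := htrans w hw
  have hFb := Fp_pointwise_bound hFp hb (Iop w) hw'
  have hsa : ⟪u, gopE Fp Iop w⟫ = ⟪Iop u, Fp (Iop w)⟫ := by
    rw [gopE_apply, ← Iop_selfadj hIop]
  rw [hsa, inner_cutLp_right (Iic b) measurableSet_Iic (Iop u) (Fp (Iop w))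
    (hu'.mono fun t ht hts => ht (lt_of_not_ge hts))]
  have hcut : ‖cutLp (Iic b) measurableSet_Iic (Fp (Iop w))‖
      ≤ Real.sqrt (mu (Iic b)).toReal * (2 * (Real.sqrt b * ‖Iop w‖)) := by
    refine norm_cutLp_le _ _ (by rw [mu_Iic hb.le]; exact ENNReal.ofReal_ne_top) _
      (by positivity) ?_
    filter_upwards [hFb] with t ht _
    exact ht
  have hmeas : Real.sqrt (mu (Iic b)).toReal = Real.sqrt b := by
    rw [mu_Iic hb.le, ENNReal.toReal_ofReal hb.le]
  have hIopw : ‖Iop w‖ = ‖w‖ := Iop.norm_map w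
  have hIopu : ‖Iop u‖ = ‖u‖ := Iop.norm_map u
  calc ‖⟪Iop u, cutLp (Iic b) measurableSet_Iic (Fp (Iop w))⟫‖
      ≤ ‖Iop u‖ * ‖cutLp (Iic b) measurableSet_Iic (Fp (Iop w))‖ := norm_inner_le_norm _ _
    _ ≤ ‖u‖ * (Real.sqrt (mu (Iic b)).toReal * (2 * (Real.sqrt b * ‖Iop w‖))) := by
        rw [hIopu]
        exact mul_le_mul_of_nonneg_left hcut (norm_nonneg _)
    _ = 2 * b * ‖u‖ * ‖w‖ := by
        rw [hmeas, hIopw]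
        have hss : Real.sqrt b * Real.sqrt b = b := Real.mul_self_sqrt hb.le
        linear_combination 2 * ‖u‖ * ‖w‖ * hss
    _ = 2 * Λ⁻¹ * ‖u‖ * ‖w‖ := by rw [hbdef]

lemma memH_mono {Λ Λ' : ℝ} (h : Λ ≤ Λ') {f : Kspace} (hf : MemH Fp Iop Λ f) :
    MemH Fp Iop Λ' f :=
  ⟨hf.1.mono fun t ht h' => ht (lt_of_le_of_lt h h'),
   hf.2.mono fun t ht h' => ht (lt_of_le_of_lt h h')⟩

end Ops

/-- The union of the `H_Λ` as a submodule. -/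
def SubS (Fp Iop : Kspace ≃ₗᵢ[ℂ] Kspace) : Submodule ℂ Kspace where
  carrier := {f : Kspace | ∃ Λ : ℝ, 0 < Λ ∧ MemH Fp Iop Λ f}
  zero_mem' := by
    simp only [Set.mem_setOf_eq]
    refine ⟨1, one_pos, ?_, ?_⟩
    · filter_upwards [Lp.coeFn_zero (E := ℂ) (p := 2) (μ := mu)] with t ht _
      simpa using ht
    · have h0 : Iop (Fp (Iop (0 : Kspace))) = 0 := by simp
      rw [h0]
      filter_upwards [Lp.coeFn_zero (E := ℂ) (p := 2) (μ := mu)] with t ht _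
      simpa using ht
  add_mem' := by
    intro a b ha hb
    simp only [Set.mem_setOf_eq] at ha hb ⊢
    obtain ⟨Λ₁, h1, m1⟩ := ha
    obtain ⟨Λ₂, h2, m2⟩ := hb
    refine ⟨max Λ₁ Λ₂, lt_max_of_lt_left h1, ?_, ?_⟩
    · filter_upwards [Lp.coeFn_add a b, (memH_mono (le_max_left _ _) m1).1,
        (memH_mono (le_max_right _ _) m2).1] with t ht h1t h2t htm
      rw [ht, Pi.add_apply, h1t htm, h2t htm, add_zero]
    · have hadd : Iop (Fp (Iop (a + b))) = Iop (Fp (Iop a)) + Iop (Fp (Iop b)) := by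
        simp only [map_add]
      rw [hadd]
      filter_upwards [Lp.coeFn_add (Iop (Fp (Iop a))) (Iop (Fp (Iop b))),
        (memH_mono (le_max_left _ _) m1).2, (memH_mono (le_max_right _ _) m2).2]
        with t ht h1t h2t htm
      rw [ht, Pi.add_apply, h1t htm, h2t htm, add_zero]
  smul_mem' := by
    intro c a ha
    simp only [Set.mem_setOf_eq] at ha ⊢
    obtain ⟨Λ, hΛ, m⟩ := ha
    refine ⟨Λ, hΛ, ?_, ?_⟩
    · filter_upwards [Lp.coeFn_smul c a, m.1] with t ht hat htΛ
      rw [ht, Pi.smul_apply, hat htΛ, smul_zero]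
    · have hsmul : Iop (Fp (Iop (c • a))) = c • Iop (Fp (Iop a)) := by
        simp only [_root_.map_smul]
      rw [hsmul]
      filter_upwards [Lp.coeFn_smul c (Iop (Fp (Iop a))), m.2] with t ht hat htΛ
      rw [ht, Pi.smul_apply, hat htΛ, smul_zero]

/-- The subspace `D_Λ + G D_Λ`. -/
def Wsub (Fp Iop : Kspace ≃ₗᵢ[ℂ] Kspace) (Λ : ℝ) : Submodule ℂ Kspace :=
  Dsub Λ ⊔ (Dsub Λ).map ((gopE Fp Iop).toLinearEquiv : Kspace →ₗ[ℂ] Kspace)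

lemma gop_lin_apply (Fp Iop : Kspace ≃ₗᵢ[ℂ] Kspace) (w : Kspace) :
    ((gopE Fp Iop).toLinearEquiv : Kspace →ₗ[ℂ] Kspace) w = gopE Fp Iop w := rfl

section Main

variable {Fp Iop : Kspace ≃ₗᵢ[ℂ] Kspace}

lemma memH_iff_orth (hFp : IsCosineTransform Fp) (hIop : IsIOperator Iop) (Λ : ℝ) (f : Kspace) :
    MemH Fp Iop Λ f ↔ f ∈ (Wsub Fp Iop Λ)ᗮ := by
  constructor
  · rintro ⟨h1, h2⟩
    rw [Submodule.mem_orthogonal]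
    intro x hx
    rcases Submodule.mem_sup.1 hx with ⟨u, hu, y, hy, rfl⟩
    rcases Submodule.mem_map.1 hy with ⟨w, hw, rfl⟩
    rw [gop_lin_apply, inner_add_left]
    have e1 : ⟪u, f⟫ = 0 := by
      rw [L2.inner_def]
      have hz : (fun t => ⟪(u : ℝ → ℂ) t, (f : ℝ → ℂ) t⟫) =ᵐ[mu] (fun _ => (0 : ℂ)) := by
        filter_upwards [hu, h1, mu_ae_ne Λ] with t h1t h2t h3t
        rcases lt_or_gt_of_ne h3t with hlt | hgt
        · rw [h1t hlt, inner_zero_left]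
        · rw [h2t hgt, inner_zero_right]
      rw [integral_congr_ae hz, integral_zero]
    have e2 : ⟪gopE Fp Iop w, f⟫ = 0 := by
      rw [gopE_selfadj hFp hIop, L2.inner_def]
      have hz : (fun t => ⟪(w : ℝ → ℂ) t, (gopE Fp Iop f : ℝ → ℂ) t⟫)
          =ᵐ[mu] (fun _ => (0 : ℂ)) := by
        filter_upwards [hw, h2, mu_ae_ne Λ] with t h1t h2t h3t
        rcases lt_or_gt_of_ne h3t with hlt | hgt
        · rw [h1t hlt, inner_zero_left]
        · have : (gopE Fp Iop f : ℝ → ℂ) t = 0 := h2t hgt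
          rw [this, inner_zero_right]
      rw [integral_congr_ae hz, integral_zero]
    rw [e1, e2, add_zero]
  · intro hf
    constructor
    · refine vanish_of_orth f fun u hu => ?_
      exact (Submodule.mem_orthogonal _ f).1 hf u (Submodule.mem_sup_left hu)
    · refine vanish_of_orth (gopE Fp Iop f) fun u hu => ?_
      have hmem : gopE Fp Iop u ∈ Wsub Fp Iop Λ :=
        Submodule.mem_sup_right (Submodule.mem_map.2 ⟨u, hu, rfl⟩)
      have := (Submodule.mem_orthogonal _ f).1 hf _ hmem
      rwa [gopE_selfadj hFp hIop] at this

end Main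

end Statement14Aux

open Statement14Aux

set_option maxHeartbeats 1000000

/-- `⋂_{Λ>0} H_Λ = {0}` and `⋃_{Λ>0} H_Λ` is dense in `K`. -/
theorem statement14
    (Fp : Kspace ≃ₗᵢ[ℂ] Kspace) (hFp : IsCosineTransform Fp)
    (Iop : Kspace ≃ₗᵢ[ℂ] Kspace) (hIop : IsIOperator Iop) :
    (∀ f : Kspace, (∀ Λ : ℝ, 0 < Λ → MemH Fp Iop Λ f) → f = 0) ∧
    Dense {f : Kspace | ∃ Λ : ℝ, 0 < Λ ∧ MemH Fp Iop Λ f} := by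
  constructor
  · -- Part 1
    intro f hf
    rw [Lp.eq_zero_iff_ae_eq_zero]
    have h : ∀ n : ℕ, ∀ᵐ t ∂mu, 1 / ((n : ℝ) + 1) < t → (f : ℝ → ℂ) t = 0 :=
      fun n => (hf _ (by positivity)).1
    rw [← ae_all_iff] at h
    filter_upwards [h, mu_ae_pos] with t ht htpos
    obtain ⟨n, hn⟩ := exists_nat_one_div_lt htpos
    simpa using ht n hn
  · -- Part 2
    have hset : {f : Kspace | ∃ Λ : ℝ, 0 < Λ ∧ MemH Fp Iop Λ f}
        = (SubS Fp Iop : Set Kspace) := rfl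
    rw [hset, Submodule.dense_iff_topologicalClosure_eq_top,
      Submodule.topologicalClosure_eq_top_iff, Submodule.eq_bot_iff]
    intro g hg
    have hg' : ∀ f : Kspace, (∃ Λ : ℝ, 0 < Λ ∧ MemH Fp Iop Λ f) → ⟪f, g⟫ = 0 :=
      fun f hf => (Submodule.mem_orthogonal _ g).1 hg f hf
    have hclos : ∀ Λ : ℝ, 0 < Λ → g ∈ closure ((Wsub Fp Iop Λ : Submodule ℂ Kspace) : Set Kspace) := by
      intro Λ hΛ
      have h2 : g ∈ ((Wsub Fp Iop Λ)ᗮ)ᗮ := by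
        rw [Submodule.mem_orthogonal]
        intro f hf
        exact hg' f ⟨Λ, hΛ, (memH_iff_orth hFp hIop Λ f).2 hf⟩
      rw [Submodule.orthogonal_orthogonal_eq_closure] at h2
      rw [← SetLike.mem_coe, Submodule.topologicalClosure_coe] at h2
      exact h2
    -- key estimate
    have key : ∀ ε : ℝ, 0 < ε → ‖g‖ ^ 2 ≤ ε * (5 * ‖g‖ + 4 * ε) := by
      intro ε hε
      have hev : ∀ t : ℝ, 0 < t → ∀ᶠ n : ℕ in Filter.atTop, t ∉ Ici ((n : ℝ)) := by
        intro t ht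
        rw [Filter.eventually_atTop]
        refine ⟨⌊t⌋₊ + 1, fun n hn => ?_⟩
        simp only [mem_Ici, not_le]
        calc t < (⌊t⌋₊ + 1 : ℕ) := by exact_mod_cast Nat.lt_floor_add_one t
          _ ≤ (n : ℝ) := by exact_mod_cast hn
      have T1 := tendsto_norm_cutLp g (fun n => Ici ((n : ℝ))) (fun n => measurableSet_Ici) hev
      have T2 := tendsto_norm_cutLp (gopE Fp Iop g) (fun n => Ici ((n : ℝ)))
        (fun n => measurableSet_Ici) hev
      obtain ⟨n, hn1, hn2, hn4⟩ : ∃ n : ℕ,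
          ‖cutLp (Ici ((n : ℝ))) measurableSet_Ici g‖ < ε ∧
          ‖cutLp (Ici ((n : ℝ))) measurableSet_Ici (gopE Fp Iop g)‖ < ε ∧ 4 ≤ n := by
        have := ((T1.eventually_lt_const hε).and
          ((T2.eventually_lt_const hε).and (Filter.eventually_ge_atTop 4))).exists
        obtain ⟨n, h1, h2, h3⟩ := this
        exact ⟨n, h1, h2, h3⟩
      set Λ : ℝ := (n : ℝ) with hΛdef
      have hΛ4 : (4 : ℝ) ≤ Λ := by rw [hΛdef]; exact_mod_cast hn4
      have hΛ : 0 < Λ := by linarith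
      obtain ⟨x, hxW, hxd⟩ := Metric.mem_closure_iff.1 (hclos Λ hΛ) ε hε
      rw [SetLike.mem_coe] at hxW
      rcases Submodule.mem_sup.1 hxW with ⟨u, hu, y, hy, rfl⟩
      rcases Submodule.mem_map.1 hy with ⟨w, hw, rfl⟩
      have hu' : ∀ᵐ t ∂mu, t < Λ → (u : ℝ → ℂ) t = 0 := hu
      have hw' : ∀ᵐ t ∂mu, t < Λ → (w : ℝ → ℂ) t = 0 := hw
      set z := gopE Fp Iop w with hzdef
      have hdist : ‖g - (u + z)‖ < ε := by rwa [dist_eq_norm] at hxd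
      -- inner product bounds
      have hInu : ‖⟪g, u⟫‖ ≤ ε * ‖u‖ := by
        rw [inner_cutLp_left (Ici Λ) measurableSet_Ici g u
          (hu'.mono fun t ht hts => ht (lt_of_not_ge fun hc => hts hc))]
        calc ‖⟪cutLp (Ici Λ) measurableSet_Ici g, u⟫‖
            ≤ ‖cutLp (Ici Λ) measurableSet_Ici g‖ * ‖u‖ := norm_inner_le_norm _ _
          _ ≤ ε * ‖u‖ := mul_le_mul_of_nonneg_right hn1.le (norm_nonneg _)
      have hInw : ‖⟪g, z⟫‖ ≤ ε * ‖w‖ := by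
        rw [hzdef, ← gopE_selfadj hFp hIop]
        rw [inner_cutLp_left (Ici Λ) measurableSet_Ici (gopE Fp Iop g) w
          (hw'.mono fun t ht hts => ht (lt_of_not_ge fun hc => hts hc))]
        calc ‖⟪cutLp (Ici Λ) measurableSet_Ici (gopE Fp Iop g), w⟫‖
            ≤ ‖cutLp (Ici Λ) measurableSet_Ici (gopE Fp Iop g)‖ * ‖w‖ := norm_inner_le_norm _ _
          _ ≤ ε * ‖w‖ := mul_le_mul_of_nonneg_right hn2.le (norm_nonneg _)
      have hInr : ‖⟪g, g - (u + z)⟫‖ ≤ ‖g‖ * ε := by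
        refine le_trans (norm_inner_le_norm _ _) ?_
        exact mul_le_mul_of_nonneg_left hdist.le (norm_nonneg g)
      -- splitting of ⟪g,g⟫
      have hsplit : ‖g‖ ^ 2 ≤ ‖⟪g, u⟫‖ + ‖⟪g, z⟫‖ + ‖⟪g, g - (u + z)⟫‖ := by
        have hdecomp : ⟪g, g⟫ = ⟪g, u⟫ + ⟪g, z⟫ + ⟪g, g - (u + z)⟫ := by
          rw [← inner_add_right, ← inner_add_right]
          congr 1
          abel
        calc ‖g‖ ^ 2 = RCLike.re ⟪g, g⟫ := (inner_self_eq_norm_sq g).symm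
          _ = RCLike.re (⟪g, u⟫ + ⟪g, z⟫ + ⟪g, g - (u + z)⟫) := by rw [hdecomp]
          _ ≤ ‖⟪g, u⟫ + ⟪g, z⟫ + ⟪g, g - (u + z)⟫‖ := RCLike.re_le_norm _
          _ ≤ ‖⟪g, u⟫‖ + ‖⟪g, z⟫‖ + ‖⟪g, g - (u + z)⟫‖ :=
              le_trans (norm_add_le _ _) (add_le_add (norm_add_le _ _) le_rfl)
      -- bounds on ‖u‖, ‖w‖
      have hx : ‖u + z‖ ≤ ‖g‖ + ε := by
        have h1 : u + z = g - (g - (u + z)) := by abel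
        rw [h1]
        exact le_trans (norm_sub_le _ _) (add_le_add le_rfl hdist.le)
      have hangle := inner_angle hFp hIop hΛ u w hu' hw'
      have hΛi : Λ⁻¹ ≤ 4⁻¹ := inv_anti₀ (by norm_num) hΛ4
      have hsmall : ‖⟪u, gopE Fp Iop w⟫‖ ≤ (1 / 2) * (‖u‖ * ‖w‖) := by
        refine le_trans hangle ?_
        have h1 : 2 * Λ⁻¹ * ‖u‖ * ‖w‖ ≤ 2 * 4⁻¹ * ‖u‖ * ‖w‖ := by
          have := mul_nonneg (norm_nonneg u) (norm_nonneg w)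
          nlinarith
        linarith [h1]
      have hzw : ‖z‖ = ‖w‖ := (gopE Fp Iop).norm_map w
      have hexp : ‖u + z‖ ^ 2 = ‖u‖ ^ 2 + 2 * RCLike.re ⟪u, z⟫ + ‖z‖ ^ 2 :=
        norm_add_sq u z
      have hre : -(1 / 2 * (‖u‖ * ‖w‖)) ≤ RCLike.re ⟪u, z⟫ := by
        have h1 : |RCLike.re ⟪u, z⟫| ≤ ‖⟪u, z⟫‖ := RCLike.abs_re_le_norm _
        have h2 : ‖⟪u, z⟫‖ ≤ 1 / 2 * (‖u‖ * ‖w‖) := by rw [hzdef]; exact hsmall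
        have := abs_le.1 (h1.trans h2)
        linarith [this.1]
      have hxsq : 1 / 2 * (‖u‖ ^ 2 + ‖w‖ ^ 2) ≤ (‖g‖ + ε) ^ 2 := by
        have h0 : (0:ℝ) ≤ ‖g‖ + ε := by positivity
        have h1 : ‖u + z‖ ^ 2 ≤ (‖g‖ + ε) ^ 2 := by
          have := norm_nonneg (u + z)
          nlinarith [hx]
        rw [hexp, hzw] at h1
        nlinarith [sq_nonneg (‖u‖ - ‖w‖), hre]
      have hCpos : (0:ℝ) < ‖g‖ + ε := by positivity
      have hsqu : ‖u‖ ^ 2 ≤ (2 * (‖g‖ + ε)) ^ 2 := by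
        have h4 : (2 * (‖g‖ + ε)) ^ 2 = 4 * (‖g‖ + ε) ^ 2 := by ring
        rw [h4]
        have := sq_nonneg ‖w‖
        have := sq_nonneg (‖g‖ + ε)
        linarith
      have hsqw : ‖w‖ ^ 2 ≤ (2 * (‖g‖ + ε)) ^ 2 := by
        have h4 : (2 * (‖g‖ + ε)) ^ 2 = 4 * (‖g‖ + ε) ^ 2 := by ring
        rw [h4]
        have := sq_nonneg ‖u‖
        have := sq_nonneg (‖g‖ + ε)
        linarith
      have hub : ‖u‖ ≤ 2 * (‖g‖ + ε) := by
        have h5 := Real.sqrt_le_sqrt hsqu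
        rwa [Real.sqrt_sq (norm_nonneg u), Real.sqrt_sq (by positivity)] at h5
      have hwb : ‖w‖ ≤ 2 * (‖g‖ + ε) := by
        have h5 := Real.sqrt_le_sqrt hsqw
        rwa [Real.sqrt_sq (norm_nonneg w), Real.sqrt_sq (by positivity)] at h5
      have h1 : ε * ‖u‖ ≤ ε * (2 * (‖g‖ + ε)) := mul_le_mul_of_nonneg_left hub hε.le
      have h2 : ε * ‖w‖ ≤ ε * (2 * (‖g‖ + ε)) := mul_le_mul_of_nonneg_left hwb hε.le
      calc ‖g‖ ^ 2 ≤ ‖⟪g, u⟫‖ + ‖⟪g, z⟫‖ + ‖⟪g, g - (u + z)⟫‖ := hsplit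
        _ ≤ ε * ‖u‖ + ε * ‖w‖ + ‖g‖ * ε := add_le_add (add_le_add hInu hInw) hInr
        _ ≤ ε * (2 * (‖g‖ + ε)) + ε * (2 * (‖g‖ + ε)) + ‖g‖ * ε := by linarith
        _ = ε * (5 * ‖g‖ + 4 * ε) := by ring
    -- conclude g = 0
    by_contra hne
    have hng : 0 < ‖g‖ := norm_pos_iff.2 hne
    have hk := key (‖g‖ / 10) (by positivity)
    nlinarith [hk, hng]
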